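/- Let $S = (S^\alpha_i)$ be an $n \times m$ real matrix ($n \ge 2$) with singular values $s_1 \ge \cdots \ge s_n \ge 0$. If $s_1 \ge \sqrt{n-1}$ and $s_i s_j \le 1$ for all $i \ne j$, then $\det\left(\delta_{ij} + \sum_{\alpha=1}^m S^\alpha_i S^\alpha_j\right) \le 1 + \left(\sum_{\alpha=1}^m \left(\sum_{i=1}^n (S^\alpha_i)^2\right)^{1/2}\right)^2$, where the determinant is of the $n \times n$ matrix $I_n + S S^T$ (viewing $S^\alpha$ as the $\alpha$-th column of an $n\times m$ matrix). Equivalently, $\prod_{i=1}^n(1+s_i^2) \le 1 + (\sum_\alpha |S^\alpha|)^2$ where $|S^\alpha|$ denotes the Euclidean norm of the $\alpha$-th column. -/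

import Mathlib

private lemma prod_one_add_le {ι : Type*} (F : Finset ι) (a : ι → ℝ)
    (h0 : ∀ i ∈ F, 0 ≤ a i) (h1 : ∑ i ∈ F, a i ≤ 1) :
    ∏ i ∈ F, (1 + a i) ≤ 1 + (∑ i ∈ F, a i) + (∑ i ∈ F, a i) ^ 2 := by
  induction F using Finset.cons_induction with
  | empty => simp
  | cons x F hx ih =>
    rw [Finset.prod_cons, Finset.sum_cons]
    rw [Finset.sum_cons] at h1
    have hax : 0 ≤ a x := h0 x (Finset.mem_cons_self _ _)
    have hF0 : ∀ i ∈ F, 0 ≤ a i := fun i hi => h0 i (Finset.mem_cons_of_mem hi)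
    have hs0 : 0 ≤ ∑ i ∈ F, a i := Finset.sum_nonneg hF0
    have hs1 : ∑ i ∈ F, a i ≤ 1 := by linarith
    have hih := ih hF0 hs1
    have hstep : (1 + a x) * ∏ i ∈ F, (1 + a i)
        ≤ (1 + a x) * (1 + (∑ i ∈ F, a i) + (∑ i ∈ F, a i) ^ 2) :=
      mul_le_mul_of_nonneg_left hih (by linarith)
    nlinarith [hstep, mul_nonneg hax hs0]

private lemma final_calc (t u B : ℝ) (ht0 : 0 ≤ t) (ht2 : 2 ≤ t ^ 2)
    (hB0 : 0 ≤ B) (hB1 : B ≤ 1) (hu0 : 0 ≤ u) (hu_t : u ≤ t) (htB : t * B ≤ u) :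
    (1 + t ^ 2) * (1 + B + B ^ 2) ≤ 1 + (t + u) ^ 2 := by
  have e1 : (t * B) * (t * B) ≤ u * u := mul_le_mul htB htB (by positivity) hu0
  have e2 : t * (t * B) ≤ t * u := mul_le_mul_of_nonneg_left htB ht0
  have e3 : B ^ 2 ≤ B := by nlinarith
  have e4 : 2 * B ≤ t ^ 2 * B := by nlinarith
  nlinarith [e1, e2, e3, e4]

private lemma key_ineq (n : ℕ) (hn : 2 ≤ n) (s : Fin n → ℝ) (hnonneg : ∀ i, 0 ≤ s i)
    (h1 : Real.sqrt ((n : ℝ) - 1) ≤ s ⟨0, Nat.lt_of_lt_of_le (by norm_num) hn⟩)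
    (hpair : ∀ i j : Fin n, i ≠ j → s i * s j ≤ 1) :
    ∏ i, (1 + s i ^ 2) ≤ 1 + (∑ i, s i) ^ 2 := by
  rcases eq_or_lt_of_le hn with h2 | h3
  · -- n = 2
    have h2' : n = 2 := h2.symm
    subst h2'
    have hp := hpair 0 1 (by decide)
    have h0 := hnonneg 0
    have h1' := hnonneg 1
    rw [Fin.prod_univ_two, Fin.sum_univ_two]
    nlinarith [mul_nonneg h0 h1']
  · -- n ≥ 3
    have hn3 : (3 : ℝ) ≤ (n : ℝ) := by exact_mod_cast h3
    set i0 : Fin n := ⟨0, by omega⟩ with hi0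
    set t := s i0 with ht
    have ht0 : 0 ≤ t := hnonneg i0
    have hn1 : (0 : ℝ) ≤ (n : ℝ) - 1 := by linarith
    have htsq : (n : ℝ) - 1 ≤ t ^ 2 := by
      have h := Real.sq_sqrt hn1
      nlinarith [Real.sqrt_nonneg ((n : ℝ) - 1)]
    have ht2 : 2 ≤ t ^ 2 := by linarith
    have ht1 : 1 ≤ t := by nlinarith
    set F : Finset (Fin n) := Finset.univ.erase i0 with hF
    have hcard : (F.card : ℝ) = (n : ℝ) - 1 := by
      rw [hF, Finset.card_erase_of_mem (Finset.mem_univ _), Finset.card_univ, Fintype.card_fin]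
      have : 1 ≤ n := by omega
      push_cast [Nat.cast_sub this]
      ring
    set u := ∑ i ∈ F, s i with hu
    set B := ∑ i ∈ F, s i ^ 2 with hB
    have hst : ∀ i ∈ F, s i * t ≤ 1 := fun i hi => hpair i i0 (Finset.ne_of_mem_erase hi)
    have hu0 : 0 ≤ u := Finset.sum_nonneg fun i _ => hnonneg i
    have hB0 : 0 ≤ B := Finset.sum_nonneg fun i _ => sq_nonneg _
    have hut : u * t ≤ (n : ℝ) - 1 := by
      rw [hu, Finset.sum_mul, ← hcard]
      calc ∑ i ∈ F, s i * t ≤ ∑ _i ∈ F, (1 : ℝ) := Finset.sum_le_sum hst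
        _ = F.card := by simp
    have htB : t * B ≤ u := by
      rw [hB, hu, Finset.mul_sum]
      refine Finset.sum_le_sum fun i hi => ?_
      have h := hst i hi
      nlinarith [hnonneg i]
    have ht2B : t ^ 2 * B ≤ (n : ℝ) - 1 := by
      rw [hB, Finset.mul_sum, ← hcard]
      calc ∑ i ∈ F, t ^ 2 * s i ^ 2 ≤ ∑ _i ∈ F, (1 : ℝ) := by
            refine Finset.sum_le_sum fun i hi => ?_
            have h := hst i hi
            have h2' := mul_le_mul h h (mul_nonneg (hnonneg i) ht0) zero_le_one
            nlinarith
        _ = F.card := by simp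
    have hB1 : B ≤ 1 := by nlinarith
    have hu_t : u ≤ t := by
      have h5 : u * t ≤ t * t := by nlinarith
      exact le_of_mul_le_mul_right h5 (by linarith)
    have hprodF : ∏ i ∈ F, (1 + s i ^ 2) ≤ 1 + B + B ^ 2 :=
      prod_one_add_le F (fun i => s i ^ 2) (fun i _ => sq_nonneg _) hB1
    have hsplit : ∏ i, (1 + s i ^ 2) = (1 + t ^ 2) * ∏ i ∈ F, (1 + s i ^ 2) :=
      (Finset.mul_prod_erase Finset.univ _ (Finset.mem_univ i0)).symm
    have hsum : ∑ i, s i = t + u :=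
      (Finset.add_sum_erase Finset.univ s (Finset.mem_univ i0)).symm
    rw [hsplit, hsum]
    calc (1 + t ^ 2) * ∏ i ∈ F, (1 + s i ^ 2)
        ≤ (1 + t ^ 2) * (1 + B + B ^ 2) :=
          mul_le_mul_of_nonneg_left hprodF (by positivity)
      _ ≤ 1 + (t + u) ^ 2 := final_calc t u B ht0 ht2 hB0 hB1 hu0 hu_t htB

/-- Lemma 3.4: for an `n × m` matrix `S` (`n ≥ 2`) whose singular values
`s 0 ≥ ⋯ ≥ s (n-1) ≥ 0` (square roots of the eigenvalues of `S * Sᵀ`) satisfy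
`s 0 ≥ √(n-1)` and `s i * s j ≤ 1` for `i ≠ j`, one has
`det (I + S Sᵀ) ≤ 1 + (∑_α ‖S^α‖)²` where `S^α` is the `α`-th column. -/
theorem stmt_1 (n m : ℕ) (hn : 2 ≤ n) (S : Matrix (Fin n) (Fin m) ℝ)
    (hA : (S * S.transpose).IsHermitian)
    (s : Fin n → ℝ) (hnonneg : ∀ i, 0 ≤ s i)
    (hmono : ∀ i j : Fin n, i ≤ j → s j ≤ s i)
    (heig : ∃ σ : Equiv.Perm (Fin n), ∀ i, hA.eigenvalues (σ i) = s i ^ 2)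
    (h1 : Real.sqrt ((n : ℝ) - 1) ≤ s ⟨0, by omega⟩)
    (hpair : ∀ i j : Fin n, i ≠ j → s i * s j ≤ 1) :
    (1 + S * S.transpose).det ≤
      1 + (∑ α : Fin m, Real.sqrt (∑ i : Fin n, S i α ^ 2)) ^ 2 := by
  classical
  obtain ⟨σ, hσ⟩ := heig
  set lam : Fin n → ℝ := hA.eigenvalues with hlamdef
  have hlam : ∀ j, lam j = s (σ.symm j) ^ 2 := by
    intro j
    conv_lhs => rw [← Equiv.apply_symm_apply σ j]
    exact hσ (σ.symm j)
  set c : Fin n → ℝ := fun j => s (σ.symm j) with hc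
  have hc0 : ∀ j, 0 ≤ c j := fun j => hnonneg _
  have hlc : ∀ j, lam j = c j ^ 2 := hlam
  set V : Matrix (Fin n) (Fin n) ℝ := (hA.eigenvectorUnitary : Matrix (Fin n) (Fin n) ℝ)
    with hVdef
  have hstar : star V = V.transpose := by
    ext i j
    simp [Matrix.star_apply]
  have hVtV : V.transpose * V = 1 := by
    rw [← hstar]
    exact Matrix.mem_unitaryGroup_iff'.mp (hA.eigenvectorUnitary).2
  have hVVt : V * V.transpose = 1 := by
    rw [← hstar]
    exact Matrix.mem_unitaryGroup_iff.mp (hA.eigenvectorUnitary).2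
  have hofReal : (RCLike.ofReal ∘ lam : Fin n → ℝ) = lam := by
    funext i
    simp [RCLike.ofReal_real_eq_id]
  have hdiag : V.transpose * (S * S.transpose) * V = Matrix.diagonal lam := by
    have h : S * S.transpose = V * Matrix.diagonal lam * V.transpose := by
      have h := hA.spectral_theorem
      rw [Unitary.conjStarAlgAut_apply, hofReal] at h
      rw [← hstar]
      exact h
    rw [h]
    simp only [← Matrix.mul_assoc, hVtV, Matrix.one_mul]
    rw [Matrix.mul_assoc, hVtV, Matrix.mul_one]
  -- determinant equals product of (1 + eigenvalues)
  have hspec : S * S.transpose = V * Matrix.diagonal lam * V.transpose := by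
    have h := hA.spectral_theorem
    rw [Unitary.conjStarAlgAut_apply, hofReal] at h
    rw [← hstar]
    exact h
  have hdet : (1 + S * S.transpose).det = ∏ j, (1 + lam j) := by
    have h1' : (1 : Matrix (Fin n) (Fin n) ℝ) + S * S.transpose
        = V * Matrix.diagonal (fun j => 1 + lam j) * V.transpose := by
      have hd : Matrix.diagonal (fun j => 1 + lam j)
          = 1 + Matrix.diagonal lam := by
        rw [← Matrix.diagonal_one, ← Matrix.diagonal_add]
      rw [hd, Matrix.mul_add, Matrix.add_mul, Matrix.mul_one, hVVt, hspec]
    rw [h1', Matrix.det_mul, Matrix.det_mul, Matrix.det_diagonal]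
    have hdet1 : V.det * V.transpose.det = 1 := by
      rw [← Matrix.det_mul, hVVt, Matrix.det_one]
    calc V.det * (∏ j, (1 + lam j)) * V.transpose.det
        = (∏ j, (1 + lam j)) * (V.det * V.transpose.det) := by ring
      _ = ∏ j, (1 + lam j) := by rw [hdet1, mul_one]
  -- the SVD-style construction
  set T : Matrix (Fin m) (Fin n) ℝ := S.transpose * V with hT
  have hTT : T.transpose * T = Matrix.diagonal lam := by
    rw [hT, Matrix.transpose_mul, Matrix.transpose_transpose]
    have : V.transpose * S * (S.transpose * V) = V.transpose * (S * S.transpose) * V := by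
      simp only [Matrix.mul_assoc]
    rw [this, hdiag]
  have hTTentry : ∀ i j, (∑ α, T α i * T α j) = if i = j then lam i else 0 := by
    intro i j
    have h := congrFun (congrFun hTT i) j
    simpa [Matrix.mul_apply, Matrix.transpose_apply, Matrix.diagonal_apply] using h
  have hTnorm : ∀ i, (∑ α, T α i ^ 2) = lam i := by
    intro i
    have h := hTTentry i i
    simpa [sq] using h
  have hTzero : ∀ i, c i = 0 → ∀ α, T α i = 0 := by
    intro i hci α
    have h0 : (∑ β, T β i ^ 2) = 0 := by rw [hTnorm, hlc, hci]; ring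
    have := (Finset.sum_eq_zero_iff_of_nonneg (fun β _ => sq_nonneg (T β i))).mp h0
      α (Finset.mem_univ α)
    exact pow_eq_zero_iff (n := 2) (by norm_num) |>.mp this
  set g : Fin n → ℝ := fun i => if c i = 0 then 0 else (c i)⁻¹ with hg
  set U : Matrix (Fin m) (Fin n) ℝ := T * Matrix.diagonal g with hUdef
  have hU : ∀ α i, U α i = T α i * g i := by
    intro α i
    rw [hUdef, Matrix.mul_diagonal]
  set d : Fin n → ℝ := fun i => if c i = 0 then 0 else 1 with hd
  have hUd : U * Matrix.diagonal d = U := by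
    ext α i
    rw [Matrix.mul_diagonal, hU]
    by_cases hci : c i = 0
    · simp [hd, hg, hci, hTzero i hci α]
    · simp [hd, hci]
  have hUU : U.transpose * U = Matrix.diagonal d := by
    ext i j
    rw [Matrix.mul_apply, Matrix.diagonal_apply]
    simp only [Matrix.transpose_apply, hU]
    have : (∑ α, T α i * g i * (T α j * g j)) = g i * g j * ∑ α, T α i * T α j := by
      rw [Finset.mul_sum]
      exact Finset.sum_congr rfl fun α _ => by ring
    rw [this, hTTentry i j]
    by_cases hij : i = j
    · subst hij
      simp only [if_pos rfl]
      by_cases hci : c i = 0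
      · simp [hg, hd, hci, hlc i]
      · rw [hlc i]
        simp only [hg, hd, if_neg hci]
        field_simp
        simp
    · simp [hij]
  set P : Matrix (Fin m) (Fin m) ℝ := U * U.transpose with hP
  have hPP : P * P = P := by
    have h1' : P * P = U * (U.transpose * U) * U.transpose := by
      rw [hP]; simp only [Matrix.mul_assoc]
    rw [h1', hUU, hUd, hP]
  have hPsym : P.transpose = P := by
    rw [hP, Matrix.transpose_mul, Matrix.transpose_transpose]
  have hPle : ∀ α, P α α ≤ 1 := by
    intro α
    have h1' : P α α = ∑ β, (P α β) ^ 2 := by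
      conv_lhs => rw [← hPP]
      rw [Matrix.mul_apply]
      refine Finset.sum_congr rfl fun β _ => ?_
      have hsymm : P β α = P α β := congrFun (congrFun hPsym α) β
      rw [hsymm, sq]
    have h2 : (P α α) ^ 2 ≤ P α α := by
      conv_rhs => rw [h1']
      exact Finset.single_le_sum (f := fun β => (P α β) ^ 2)
        (fun β _ => sq_nonneg _) (Finset.mem_univ α)
    have h3 : 0 ≤ P α α := by
      rw [h1']
      exact Finset.sum_nonneg fun β _ => sq_nonneg _
    nlinarith
  set W : Matrix (Fin m) (Fin n) ℝ := U * V.transpose with hW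
  have hWWt : W * W.transpose = P := by
    rw [hW, Matrix.transpose_mul, Matrix.transpose_transpose]
    have h1' : U * V.transpose * (V * U.transpose) = U * (V.transpose * V) * U.transpose := by
      simp only [Matrix.mul_assoc]
    rw [h1', hVtV, Matrix.mul_one, hP]
  have hW2 : ∀ α, (∑ j, W α j ^ 2) ≤ 1 := by
    intro α
    have h1' : (∑ j, W α j ^ 2) = P α α := by
      have h := congrFun (congrFun hWWt α) α
      rw [Matrix.mul_apply] at h
      rw [← h]
      exact Finset.sum_congr rfl fun j _ => by rw [Matrix.transpose_apply, sq]
    rw [h1']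
    exact hPle α
  have hkey : ∀ i, (∑ α, T α i * U α i) = c i := by
    intro i
    have h1' : (∑ α, T α i * U α i) = (∑ α, T α i ^ 2) * g i := by
      rw [Finset.sum_mul]
      exact Finset.sum_congr rfl fun α _ => by rw [hU]; ring
    rw [h1', hTnorm, hlc i]
    by_cases hci : c i = 0
    · simp [hg, hci]
    · simp only [hg, if_neg hci]
      field_simp
  have hswap : ∀ α, (∑ i, T α i * U α i) = ∑ j, S j α * W α j := by
    intro α
    have hTe : ∀ i, T α i = ∑ j, S j α * V j i := by
      intro i
      rw [hT, Matrix.mul_apply]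
      exact Finset.sum_congr rfl fun j _ => by rw [Matrix.transpose_apply]
    have hWe : ∀ j, W α j = ∑ i, U α i * V j i := by
      intro j
      rw [hW, Matrix.mul_apply]
      exact Finset.sum_congr rfl fun i _ => by rw [Matrix.transpose_apply]
    calc (∑ i, T α i * U α i) = ∑ i, ∑ j, S j α * V j i * U α i := by
          refine Finset.sum_congr rfl fun i _ => ?_
          rw [hTe i, Finset.sum_mul]
      _ = ∑ j, ∑ i, S j α * V j i * U α i := Finset.sum_comm
      _ = ∑ j, S j α * W α j := by
          refine Finset.sum_congr rfl fun j _ => ?_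
          rw [hWe j, Finset.mul_sum]
          exact Finset.sum_congr rfl fun i _ => by ring
  have hcs : ∀ α, (∑ j, S j α * W α j) ≤ Real.sqrt (∑ j, S j α ^ 2) := by
    intro α
    have hCS := Finset.sum_mul_sq_le_sq_mul_sq Finset.univ (fun j => S j α) (fun j => W α j)
    have hS2 : 0 ≤ ∑ j, S j α ^ 2 := Finset.sum_nonneg fun j _ => sq_nonneg _
    have h1' : (∑ j, S j α * W α j) ^ 2 ≤ ∑ j, S j α ^ 2 := by
      calc (∑ j, S j α * W α j) ^ 2 ≤ (∑ j, S j α ^ 2) * ∑ j, W α j ^ 2 := hCS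
        _ ≤ (∑ j, S j α ^ 2) * 1 := mul_le_mul_of_nonneg_left (hW2 α) hS2
        _ = ∑ j, S j α ^ 2 := mul_one _
    calc (∑ j, S j α * W α j) ≤ |∑ j, S j α * W α j| := le_abs_self _
      _ = Real.sqrt ((∑ j, S j α * W α j) ^ 2) := (Real.sqrt_sq_eq_abs _).symm
      _ ≤ Real.sqrt (∑ j, S j α ^ 2) := Real.sqrt_le_sqrt h1'
  have hsumc : (∑ j, c j) ≤ ∑ α : Fin m, Real.sqrt (∑ i : Fin n, S i α ^ 2) := by
    calc (∑ j, c j) = ∑ j, ∑ α, T α j * U α j :=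
          Finset.sum_congr rfl fun j _ => (hkey j).symm
      _ = ∑ α, ∑ j, T α j * U α j := Finset.sum_comm
      _ = ∑ α, ∑ j, S j α * W α j := Finset.sum_congr rfl fun α _ => hswap α
      _ ≤ ∑ α : Fin m, Real.sqrt (∑ i : Fin n, S i α ^ 2) :=
          Finset.sum_le_sum fun α _ => hcs α
  have hsum_eq : (∑ j, c j) = ∑ i, s i := Equiv.sum_comp σ.symm s
  have hprod_eq : (∏ j, (1 + lam j)) = ∏ i, (1 + s i ^ 2) := by
    calc (∏ j, (1 + lam j)) = ∏ j, (1 + s (σ.symm j) ^ 2) :=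
          Finset.prod_congr rfl fun j _ => by rw [hlam j]
      _ = ∏ i, (1 + s i ^ 2) := Equiv.prod_comp σ.symm (fun i => 1 + s i ^ 2)
  have hkey2 := key_ineq n hn s hnonneg h1 hpair
  have hs0 : 0 ≤ ∑ i, s i := Finset.sum_nonneg fun i _ => hnonneg i
  calc (1 + S * S.transpose).det = ∏ j, (1 + lam j) := hdet
    _ = ∏ i, (1 + s i ^ 2) := hprod_eq
    _ ≤ 1 + (∑ i, s i) ^ 2 := hkey2
    _ ≤ 1 + (∑ α : Fin m, Real.sqrt (∑ i : Fin n, S i α ^ 2)) ^ 2 := by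
        have h := hsum_eq ▸ hsumc
        exact add_le_add_right (pow_le_pow_left₀ hs0 h 2) 1
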